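/- Every q^r-divisible spanning set of q^{r+1} points in PG(v-1,q) admits at least one hyperplane containing none of its points. -/

import Mathlib

open Module
open scoped Classical

section Aux
open Finset

variable {v : ℕ} {F : Type} [Field F] [Fintype F]

noncomputable def ev (x : Fin v → F) : (Fin v → F) →ₗ[F] F :=
  ∑ i, x i • LinearMap.proj i

lemma ev_apply (x y : Fin v → F) : ev x y = ∑ i, x i * y i := by
  simp [ev]

lemma ev_comm (x y : Fin v → F) : ev x y = ev y x := by
  simp [ev_apply, mul_comm]

lemma ev_surj {x : Fin v → F} (hx : x ≠ 0) : Function.Surjective (ev x) := by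
  obtain ⟨i, hi⟩ : ∃ i, x i ≠ 0 := by
    by_contra h; push_neg at h; exact hx (funext h)
  intro c
  refine ⟨(c * (x i)⁻¹) • (Pi.single i 1 : Fin v → F), ?_⟩
  rw [map_smul]
  rw [show ev x (Pi.single i 1 : Fin v → F) = x i by
    simp [ev_apply, Pi.single_apply, mul_ite, Finset.sum_ite_eq]]
  field_simp
  rw [smul_eq_mul, div_mul_cancel₀ c hi]

lemma ev_ker_finrank {x : Fin v → F} (hx : x ≠ 0) :
    finrank F (LinearMap.ker (ev x)) = v - 1 := by
  have h := (ev x).finrank_range_add_finrank_ker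
  rw [LinearMap.range_eq_top.2 (ev_surj hx)] at h
  simp only [finrank_top, Module.finrank_self, Module.finrank_pi, Fintype.card_fin] at h
  omega

lemma card_ev_zero {q : ℕ} (hF : Fintype.card F = q) {x : Fin v → F} (hx : x ≠ 0) :
    (Finset.univ.filter fun y : Fin v → F => ev x y = 0).card = q ^ (v - 1) := by
  rw [← Fintype.card_subtype]
  have : Fintype.card {y : Fin v → F // ev x y = 0}
      = Fintype.card (LinearMap.ker (ev x)) := by
    apply Fintype.card_congr
    exact Equiv.refl _ |>.subtypeEquiv (fun y => by simp [LinearMap.mem_ker])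
  rw [this, card_eq_pow_finrank (K := F), ev_ker_finrank hx, hF]

end Aux

/-- every `q^r`-divisible spanning set of `q^(r+1)` points in
`PG(v-1,q)` admits at least one empty hyperplane. -/
theorem stmt6 (q v r : ℕ) (F : Type) [Field F] [Fintype F] (hF : Fintype.card F = q)
    (S : Finset (Submodule F (Fin v → F))) (hpts : ∀ P ∈ S, finrank F P = 1)
    (hcard : S.card = q ^ (r + 1))
    (hdiv : ∀ H : Submodule F (Fin v → F), finrank F H = v - 1 →
      q ^ r ∣ (S.filter fun P => P ≤ H).card)
    (hspan : (⨆ P ∈ S, P) = (⊤ : Submodule F (Fin v → F))) :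
    ∃ H : Submodule F (Fin v → F), finrank F H = v - 1 ∧
      (S.filter fun P => P ≤ H).card = 0 := by
  by_contra hcon
  push_neg at hcon
  have hq : 2 ≤ q := hF ▸ Fintype.one_lt_card
  -- S is nonempty, hence v ≥ 1
  have hS0 : S.Nonempty := Finset.card_pos.mp (by rw [hcard]; positivity)
  have hv1 : 1 ≤ v := by
    obtain ⟨P0, hP0⟩ := hS0
    have h1 := hpts P0 hP0
    have h2 : finrank F P0 ≤ finrank F (Fin v → F) := P0.finrank_le
    rw [h1] at h2
    simpa [Module.finrank_pi] using h2
  -- every point is a span of a nonzero vector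
  have key : ∀ P ∈ S, ∃ x : Fin v → F, x ≠ 0 ∧ P = Submodule.span F {x} := by
    intro P hP
    have h1 := hpts P hP
    have hPbot : P ≠ ⊥ := by
      intro h; rw [h] at h1; simp at h1
    obtain ⟨x, hxP, hx0⟩ := Submodule.exists_mem_ne_zero_of_ne_bot hPbot
    have hle : Submodule.span F {x} ≤ P := by
      rw [Submodule.span_le]; simpa using hxP
    exact ⟨x, hx0, (Submodule.eq_of_le_of_finrank_eq hle
      (by rw [finrank_span_singleton hx0, h1])).symm⟩
  set T : Finset (Fin v → F) := Finset.univ.filter (fun y => y ≠ 0) with hT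
  have hTcard : T.card = q ^ v - 1 := by
    rw [hT, Finset.filter_ne', Finset.card_erase_of_mem (Finset.mem_univ 0),
      Finset.card_univ]
    simp [hF]
  set N := ∑ y ∈ T, (S.filter fun P => P ≤ LinearMap.ker (ev y)).card with hN
  -- lower bound
  have hlow : T.card * q ^ r ≤ N := by
    rw [hN, ← smul_eq_mul]
    apply Finset.card_nsmul_le_sum
    intro y hy
    have hy0 : y ≠ 0 := by simpa [hT] using hy
    have hrk := ev_ker_finrank hy0
    exact Nat.le_of_dvd (Nat.pos_of_ne_zero (hcon _ hrk)) (hdiv _ hrk)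
  -- upper bound via double counting
  have hswap : N = ∑ P ∈ S, (T.filter fun y => P ≤ LinearMap.ker (ev y)).card := by
    rw [hN]
    simp only [Finset.card_filter]
    exact Finset.sum_comm
  have hPcount : ∀ P ∈ S,
      (T.filter fun y => P ≤ LinearMap.ker (ev y)).card = q ^ (v - 1) - 1 := by
    intro P hP
    obtain ⟨x, hx0, rfl⟩ := key P hP
    have heq : (T.filter fun y => Submodule.span F {x} ≤ LinearMap.ker (ev y))
        = (Finset.univ.filter fun y : Fin v → F => ev x y = 0).erase 0 := by
      ext y
      simp [hT, Finset.mem_erase, Finset.mem_filter,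
        Submodule.span_singleton_le_iff_mem, LinearMap.mem_ker, ev_comm x y, and_comm]
    rw [heq, Finset.card_erase_of_mem (by simp), card_ev_zero hF hx0]
  have hup : N = q ^ (r + 1) * (q ^ (v - 1) - 1) := by
    rw [hswap, Finset.sum_congr rfl hPcount, Finset.sum_const, smul_eq_mul, hcard]
  -- arithmetic contradiction
  rw [hup, hTcard] at hlow
  obtain ⟨w, rfl⟩ : ∃ w, v = w + 1 := ⟨v - 1, by omega⟩
  rw [pow_succ, pow_succ] at hlow
  simp only [Nat.add_sub_cancel] at hlow
  set A := q ^ w with hA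
  set B := q ^ r with hB
  have hA1 : 1 ≤ A := Nat.one_le_pow _ _ (by omega)
  have hB1 : 1 ≤ B := Nat.one_le_pow _ _ (by omega)
  have e1 : (A * q - 1) * B = A * q * B - B := by rw [Nat.sub_mul, one_mul]
  have e2 : B * q * (A - 1) = A * q * B - q * B := by
    rw [Nat.mul_sub, mul_one]; ring_nf
  rw [e1, e2] at hlow
  have h4 : q * B ≤ A * q * B := by
    calc q * B ≤ A * (q * B) := Nat.le_mul_of_pos_left _ (by omega)
    _ = A * q * B := by ring
  have h5 : B < q * B := by
    calc B = 1 * B := (one_mul B).symm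
    _ < q * B := by
        apply Nat.mul_lt_mul_of_lt_of_le (by omega) (le_refl B) (by omega)
  set M := A * q * B with hM
  set C := q * B with hC
  omega
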